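/- With P_n(x) = det(M_n(x)) as above, for all n > 1: P_{2n}(x) − x^{2n} = P_{n−1}(x)·(P_{n+1}(x) − x²·P_{n−1}(x)). -/
import Mathlib
open Matrix Polynomial

noncomputable def Mmat (n : ℕ) (x : ℂ) : Matrix (Fin n) (Fin n) ℂ :=
  Matrix.of fun i j =>
    if (i : ℕ) = (j : ℕ) then 1
    else if (i : ℕ) + 1 = (j : ℕ) ∨ (j : ℕ) + 1 = (i : ℕ) then x else 0

noncomputable def P (n : ℕ) (x : ℂ) : ℂ := (Mmat n x).det

lemma Mmat_apply (n : ℕ) (x : ℂ) (i j : Fin n) :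
    Mmat n x i j = if (i : ℕ) = (j : ℕ) then 1
    else if (i : ℕ) + 1 = (j : ℕ) ∨ (j : ℕ) + 1 = (i : ℕ) then x else 0 := rfl

lemma P_rec (n : ℕ) (x : ℂ) : P (n + 2) x = P (n + 1) x - x ^ 2 * P n x := by
  have hsa : ∀ (j : Fin n), ((((0:Fin (n+1)).succ).succAbove j.succ : Fin (n+2)) : ℕ) = (j : ℕ) + 2 := by
    intro j
    rw [Fin.succAbove_of_le_castSucc]
    · rw [Fin.val_succ, Fin.val_succ]
    · simp only [Fin.le_def, Fin.coe_castSucc, Fin.val_succ, Fin.val_zero]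
      omega
  rw [P, Matrix.det_succ_row_zero, Fin.sum_univ_succ, Fin.sum_univ_succ]
  have h0 : Mmat (n + 2) x 0 0 = 1 := by simp [Mmat_apply]
  have h1 : Mmat (n + 2) x 0 (0 : Fin (n+1)).succ = x := by
    simp [Mmat_apply]
  have htail : ∀ j : Fin n, Mmat (n + 2) x 0 (j.succ.succ) = 0 := by
    intro j
    simp [Mmat_apply]
  have hminor0 : (Mmat (n + 2) x).submatrix Fin.succ ((0 : Fin (n+2)).succAbove)
      = Mmat (n + 1) x := by
    ext i j
    simp [Mmat_apply, Matrix.submatrix_apply, Fin.succAbove_zero]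
  have hN : ((Mmat (n + 2) x).submatrix Fin.succ (((0:Fin (n+1)).succ : Fin (n+2)).succAbove)).det
      = x * P n x := by
    rw [Matrix.det_succ_column_zero, Fin.sum_univ_succ]
    have e1 : (Mmat (n + 2) x).submatrix Fin.succ (((0:Fin (n+1)).succ : Fin (n+2)).succAbove) 0 0 = x := by
      simp [Mmat_apply, Matrix.submatrix_apply, Fin.succAbove]
    have e2 : ∀ i : Fin n,
        (Mmat (n + 2) x).submatrix Fin.succ (((0:Fin (n+1)).succ : Fin (n+2)).succAbove) i.succ 0 = 0 := by
      intro i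
      simp [Mmat_apply, Matrix.submatrix_apply, Fin.succAbove]
    have e3 : ((Mmat (n + 2) x).submatrix Fin.succ (((0:Fin (n+1)).succ : Fin (n+2)).succAbove)).submatrix
        ((0 : Fin (n+1)).succAbove) Fin.succ = Mmat n x := by
      ext i j
      simp only [Matrix.submatrix_apply, Fin.succAbove_zero, Mmat_apply, Fin.val_succ]
      rw [hsa j]
      split_ifs <;> first | rfl | omega
    simp only [e1, e3, Fin.val_zero, pow_zero, one_mul, Fin.val_succ]
    rw [Finset.sum_eq_zero]
    · simp [P]
    · intro i _
      rw [e2]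
      ring
  rw [h0, h1, hminor0, hN, Finset.sum_eq_zero]
  · simp [P]
    ring
  · intro j _
    rw [htail]
    ring

noncomputable def Q (x : ℂ) : ℕ → ℂ
  | 0 => 1
  | 1 => 1
  | (k + 2) => Q x (k + 1) - x ^ 2 * Q x k

lemma P_eq_Q (x : ℂ) : ∀ n, P n x = Q x n := by
  have key : ∀ n, P n x = Q x n ∧ P (n + 1) x = Q x (n + 1) := by
    intro n
    induction n with
    | zero =>
      constructor
      · simp [P, Q, Matrix.det_fin_zero]
      · simp [P, Q, Matrix.det_fin_one, Mmat_apply]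
    | succ k ih =>
      refine ⟨ih.2, ?_⟩
      rw [P_rec, ih.1, ih.2]
      rfl
  exact fun n => (key n).1

lemma Q_add (x : ℂ) : ∀ k m : ℕ, Q x (m + k + 2) = Q x (m + 1) * Q x (k + 1) - x ^ 2 * Q x m * Q x k := by
  have key : ∀ k m : ℕ, (Q x (m + k + 2) = Q x (m + 1) * Q x (k + 1) - x ^ 2 * Q x m * Q x k) ∧
      (Q x (m + (k + 1) + 2) = Q x (m + 1) * Q x (k + 2) - x ^ 2 * Q x m * Q x (k + 1)) := by
    intro k
    induction k with
    | zero =>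
      intro m
      constructor
      · show Q x (m + 2) = _
        rw [show Q x (m + 2) = Q x (m + 1) - x ^ 2 * Q x m from rfl]
        show _ = Q x (m+1) * 1 - x^2 * Q x m * 1
        ring
      · show Q x (m + 3) = _
        rw [show Q x (m + 3) = Q x (m + 2) - x ^ 2 * Q x (m + 1) from rfl,
            show Q x (m + 2) = Q x (m + 1) - x ^ 2 * Q x m from rfl,
            show Q x 2 = Q x 1 - x ^ 2 * Q x 0 from rfl,
            show Q x 1 = 1 from rfl, show Q x 0 = 1 from rfl]
        ring
    | succ k ih =>
      intro m
      refine ⟨(ih m).2, ?_⟩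
      have h1 := (ih m).1
      have h2 := (ih m).2
      rw [show m + (k + 1 + 1) + 2 = (m + k + 2) + 2 by ring,
          show Q x ((m + k + 2) + 2) = Q x (m + k + 2 + 1) - x ^ 2 * Q x (m + k + 2) from rfl,
          show m + k + 2 + 1 = m + (k + 1) + 2 by ring, h2, h1,
          show Q x (k + 3) = Q x (k + 2) - x ^ 2 * Q x (k + 1) from rfl,
          show Q x (k + 2) = Q x (k + 1) - x ^ 2 * Q x k from rfl]
      ring
  exact fun k m => (key k m).1

lemma Q_cassini (x : ℂ) : ∀ k, Q x (k + 1) ^ 2 - Q x (k + 2) * Q x k = x ^ (2 * (k + 1)) := by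
  intro k
  induction k with
  | zero =>
    rw [show Q x 2 = Q x 1 - x ^ 2 * Q x 0 from rfl, show Q x 1 = 1 from rfl,
        show Q x 0 = 1 from rfl]
    ring
  | succ k ih =>
    rw [show Q x (k + 1 + 2) = Q x (k + 2) - x ^ 2 * Q x (k + 1) from rfl,
        show Q x (k + 2) = Q x (k + 1) - x ^ 2 * Q x k from rfl]
    rw [show Q x (k + 2) = Q x (k + 1) - x ^ 2 * Q x k from rfl] at ih
    rw [show 2 * (k + 1 + 1) = 2 * (k + 1) + 2 by ring, pow_add]
    linear_combination x ^ 2 * ih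

theorem P_even_minus_power (n : ℕ) (hn : 1 < n) (x : ℂ) :
    P (2 * n) x - x ^ (2 * n) = P (n - 1) x * (P (n + 1) x - x ^ 2 * P (n - 1) x) := by
  obtain ⟨m, rfl⟩ : ∃ m, n = m + 2 := ⟨n - 2, by omega⟩
  simp only [P_eq_Q, show m + 2 - 1 = m + 1 by omega]
  have hadd := Q_add x m (m + 2)
  rw [show 2 * (m + 2) = m + 2 + m + 2 by ring, hadd]
  have hc := Q_cassini x m
  have : x ^ (2 * (m + 2)) = x ^ 2 * x ^ (2 * (m + 1)) := by
    rw [← pow_add]; ring_nf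
  rw [show m + 2 + m + 2 = 2 * (m + 2) by ring] at *
  rw [this, ← hc, show m + 2 + 1 = m + 3 from rfl]
  ring
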